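/- arXiv:math-ph/0512095 — 2 statements merged into one kernel-verified Lean document; each statement's English description precedes it below -/
import Mathlib

section
/- If A ⊂ V* is a ∨-system and B = A ∩ U for a subspace U ⊂ V*, then the restriction of A \ B to the subspace L = ∩_{β∈B} ker β (with collinear restricted covectors combined by replacing covectors λ_i γ, i = 1,…,k by the single covector λγ with λ² = Σλ_i²) is again a ∨-system on L. -/
open scoped Classical

/-- `A : ι → V*` (a finite family of covectors, allowing multiplicities) is a ∨-system:
the Gram form `G^A(u,v) = Σ_i A_i(u)·A_i(v)` is non-degenerate (represented by a linear
isomorphism `φ : V ≃ V*`), and for every two-dimensional plane `Pl ⊂ V*` and every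
member `A_i ∈ Pl`, the vector `Σ_{A_j ∈ Pl} A_j(A_i^∨) • A_j^∨` is proportional to
`A_i^∨`, where `α^∨ = φ⁻¹(α)`. -/
def IsVeeSystem {V : Type*} [AddCommGroup V] [Module ℝ V] {ι : Type*} [Fintype ι]
    (A : ι → Module.Dual ℝ V) : Prop :=
  ∃ φ : V ≃ₗ[ℝ] Module.Dual ℝ V,
    (∀ u v : V, φ u v = ∑ i, A i u * A i v) ∧
    ∀ Pl : Submodule ℝ (Module.Dual ℝ V), Module.finrank ℝ Pl = 2 →
      ∀ i, A i ∈ Pl → ∃ lam : ℝ,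
        ∑ j ∈ Finset.univ.filter (fun j => A j ∈ Pl),
            A j (φ.symm (A i)) • φ.symm (A j) = lam • φ.symm (A i)

open Finset Module Submodule

lemma sum_subtype_filter' {α M : Type*} [AddCommMonoid M] (s : Finset α) (p : α → Prop)
    (f : α → M) :
    ∑ j ∈ Finset.univ.filter (fun j : ↥s => p ↑j), f ↑j = ∑ a ∈ s.filter p, f a := by
  rw [Finset.sum_filter, Finset.sum_filter,
    ← Finset.sum_coe_sort s (fun a => if p a then f a else 0)]

lemma vee_span {V : Type*} [AddCommGroup V] [Module ℝ V] [FiniteDimensional ℝ V]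
    {ι : Type*} [Fintype ι] (A : ι → Module.Dual ℝ V) (φ : V ≃ₗ[ℝ] Module.Dual ℝ V)
    (hvee : ∀ Pl : Submodule ℝ (Module.Dual ℝ V), Module.finrank ℝ Pl = 2 →
      ∀ i, A i ∈ Pl → ∃ lam : ℝ,
        ∑ j ∈ Finset.univ.filter (fun j => A j ∈ Pl),
            A j (φ.symm (A i)) • φ.symm (A j) = lam • φ.symm (A i))
    (W : Submodule ℝ (Module.Dual ℝ V)) (i : ι) (hi : A i ∈ W) :
    ∑ j ∈ Finset.univ.filter (fun j => A j ∈ W),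
        A j (φ.symm (A i)) • φ.symm (A j) ∈ ℝ ∙ (φ.symm (A i)) := by
  by_cases h0 : A i = 0
  · simp [h0]
  -- finrank of a plane spanned by `A i` and an independent vector
  have hind : ∀ γ : Module.Dual ℝ V, γ ∉ span ℝ {A i} →
      Module.finrank ℝ (span ℝ ({A i, γ} : Set (Module.Dual ℝ V))) = 2 := by
    intro γ hγ
    have hγ0 : γ ≠ 0 := fun h => hγ (h ▸ zero_mem _)
    have hli : LinearIndependent ℝ ![A i, γ] := by
      rw [linearIndependent_fin2]
      refine ⟨by simpa using hγ0, fun a ha => ?_⟩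
      simp only [Matrix.cons_val_one, Matrix.head_cons, Matrix.cons_val_zero] at ha
      have ha0 : a ≠ 0 := by rintro rfl; rw [zero_smul] at ha; exact h0 ha.symm
      exact hγ (mem_span_singleton.mpr
        ⟨a⁻¹, by rw [← ha, smul_smul, inv_mul_cancel₀ ha0, one_smul]⟩)
    have h := finrank_span_eq_card hli
    have hr : Set.range ![A i, γ] = ({A i, γ} : Set (Module.Dual ℝ V)) := by
      ext x
      simp [Matrix.range_cons, Matrix.range_empty, or_comm]
    rw [hr] at h
    simpa using h
  set α₀ := φ.symm (A i) with hα₀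
  -- terms collinear with `A i` lie in the span
  have hcol : ∀ k : ι, A k ∈ span ℝ {A i} →
      A k α₀ • φ.symm (A k) ∈ ℝ ∙ α₀ := by
    intro k hk
    obtain ⟨c, hc⟩ := mem_span_singleton.mp hk
    rw [← hc, map_smul]
    exact smul_mem _ _ (smul_mem _ _ (mem_span_singleton_self _))
  rw [← Finset.sum_filter_add_sum_filter_not (Finset.univ.filter (fun j => A j ∈ W))
    (fun j => A j ∈ span ℝ {A i})]
  refine add_mem (Submodule.sum_mem _ fun k hk => ?_) ?_
  · simp only [Finset.mem_filter] at hk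
    exact hcol k hk.2
  set S := (Finset.univ.filter (fun j => A j ∈ W)).filter
      (fun j => A j ∉ span ℝ {A i}) with hS
  rw [← Finset.sum_fiberwise_of_maps_to
    (g := fun j => span ℝ ({A i, A j} : Set (Module.Dual ℝ V)))
    (t := S.image (fun j => span ℝ ({A i, A j} : Set (Module.Dual ℝ V))))
    (fun j hj => Finset.mem_image_of_mem _ hj)]
  refine Submodule.sum_mem _ fun P hP => ?_
  obtain ⟨j₀, hj₀S, hj₀P⟩ := Finset.mem_image.mp hP
  rw [hS, Finset.mem_filter, Finset.mem_filter] at hj₀S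
  obtain ⟨⟨-, hj₀W⟩, hj₀sp⟩ := hj₀S
  have hrank : Module.finrank ℝ P = 2 := hj₀P ▸ hind _ hj₀sp
  have hiP : A i ∈ P := hj₀P ▸ subset_span (Set.mem_insert _ _)
  have hPW : P ≤ W := by
    rw [← hj₀P]
    rw [span_le]
    rintro x (rfl | rfl)
    · exact hi
    · exact hj₀W
  have hfib : S.filter (fun k => span ℝ ({A i, A k} : Set (Module.Dual ℝ V)) = P)
      = (Finset.univ.filter (fun k => A k ∈ P)).filter
          (fun k => A k ∉ span ℝ {A i}) := by
    ext k
    simp only [hS, Finset.mem_filter, Finset.mem_univ, true_and]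
    constructor
    · rintro ⟨⟨hW, hsp⟩, hEq⟩
      exact ⟨hEq ▸ subset_span (Set.mem_insert_iff.mpr (Or.inr rfl)), hsp⟩
    · rintro ⟨hkP, hsp⟩
      refine ⟨⟨hPW hkP, hsp⟩, ?_⟩
      refine Submodule.eq_of_le_of_finrank_le (span_le.mpr ?_) ?_
      · rintro x (rfl | rfl)
        · exact hiP
        · exact hkP
      · rw [hrank, hind _ hsp]
  rw [hfib]
  obtain ⟨lam, hlam⟩ := hvee P hrank i hiP
  have hsplit := Finset.sum_filter_add_sum_filter_not
    (Finset.univ.filter (fun k => A k ∈ P)) (fun k => A k ∉ span ℝ {A i})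
    (fun k => A k α₀ • φ.symm (A k))
  have heq : ∑ k ∈ (Finset.univ.filter (fun k => A k ∈ P)).filter
      (fun k => A k ∉ span ℝ {A i}), A k α₀ • φ.symm (A k)
      = lam • α₀ - ∑ k ∈ (Finset.univ.filter (fun k => A k ∈ P)).filter
          (fun k => ¬ A k ∉ span ℝ {A i}), A k α₀ • φ.symm (A k) := by
    rw [eq_sub_iff_add_eq, hsplit, hlam]
  rw [heq]
  refine sub_mem (smul_mem _ _ (mem_span_singleton_self _))
    (Submodule.sum_mem _ fun k hk => ?_)
  simp only [Finset.mem_filter, not_not] at hk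
  exact hcol k hk.2

/-- if `A ⊂ V*` is a ∨-system and `B = A ∩ U` for a subspace `U ⊂ V*`,
then the family of restrictions of the covectors of `A \ B` to the subspace
`L = ∩_{β∈B} ker β` is again a ∨-system on `L`.  (Collinear restricted covectors
`λ_i γ` are combined into `λγ` with `λ² = Σλ_i²`; this leaves the Gram form and the
∨-conditions unchanged, so the family with multiplicities is used.) -/
theorem restriction_isVeeSystem
    {V : Type*} [AddCommGroup V] [Module ℝ V] [FiniteDimensional ℝ V]
    (A : Finset (Module.Dual ℝ V)) (U : Submodule ℝ (Module.Dual ℝ V))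
    (hA : IsVeeSystem (fun a : ↥A => (a : Module.Dual ℝ V)))
    (L : Submodule ℝ V)
    (hL : L = ⨅ β ∈ A.filter (fun β => β ∈ U), LinearMap.ker (β : Module.Dual ℝ V)) :
    IsVeeSystem (fun γ : ↥(A \ A.filter (fun β => β ∈ U)) =>
      (γ : Module.Dual ℝ V).domRestrict L) := by
  obtain ⟨φ, hGram, hvee⟩ := hA
  set B := A.filter (fun β => β ∈ U) with hB
  have hBA : B ⊆ A := Finset.filter_subset _ _
  have hsymm : ∀ u v : V, φ u v = φ v u := fun u v => by
    rw [hGram, hGram]; exact Finset.sum_congr rfl fun i _ => mul_comm _ _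
  have hLker : ∀ u : V, u ∈ L → ∀ β ∈ B, β u = 0 := by
    intro u hu β hβ
    rw [hL] at hu
    simp only [Submodule.mem_iInf, LinearMap.mem_ker] at hu
    exact hu β hβ
  -- the Gram form of the restricted family
  have hGramL : ∀ u v : L, φ u v
      = ∑ γ : ↥(A \ B), (γ : Module.Dual ℝ V) u * (γ : Module.Dual ℝ V) v := by
    intro u v
    rw [hGram]
    rw [Finset.sum_coe_sort A (fun a => a ↑u * a ↑v),
      Finset.sum_coe_sort (A \ B) (fun a => a ↑u * a ↑v),
      ← Finset.sum_sdiff hBA]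
    have hz : ∑ β ∈ B, β ↑u * β ↑v = 0 :=
      Finset.sum_eq_zero fun β hβ => by rw [hLker ↑u u.2 β hβ, zero_mul]
    rw [hz, add_zero]
  -- the linear map `L → L*` induced by the Gram form
  set ψ₀ : L →ₗ[ℝ] Module.Dual ℝ L :=
    L.subtype.dualMap ∘ₗ (φ.toLinearMap ∘ₗ L.subtype) with hψ₀def
  have hψ₀ : ∀ (u : L) (v : L), ψ₀ u v = φ ↑u ↑v := fun u v => rfl
  have hker : ∀ u : L, ψ₀ u = 0 → u = 0 := by
    intro u hu
    have h1 : φ ↑u ↑u = 0 := by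
      rw [← hψ₀ u u, hu]; rfl
    rw [hGram, Finset.sum_coe_sort A (fun a => a ↑u * a ↑u)] at h1
    have h2 : ∀ a : ↥A, (a : Module.Dual ℝ V) ↑u = 0 := by
      intro a
      have hall := (Finset.sum_eq_zero_iff_of_nonneg
        (fun (a : Module.Dual ℝ V) (_ : a ∈ A) => mul_self_nonneg (a ↑u))).mp h1
      exact mul_self_eq_zero.mp (hall ↑a a.2)
    have h3 : φ (↑u : V) = 0 := by
      apply LinearMap.ext
      intro v
      rw [show (φ (↑u : V)) v = φ.toLinearMap (↑u : V) v from rfl]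
      rw [show φ.toLinearMap (↑u : V) v = φ (↑u : V) v from rfl, hGram]
      simp only [LinearMap.zero_apply]
      exact Finset.sum_eq_zero fun a _ => by rw [h2 a, zero_mul]
    have h4 : (↑u : V) = 0 := by
      apply φ.injective
      rw [h3, map_zero]
    exact Subtype.ext h4
  have hinj : Function.Injective ψ₀ := (injective_iff_map_eq_zero ψ₀).mpr hker
  have hdim : finrank ℝ L = finrank ℝ (Module.Dual ℝ L) := (Subspace.dual_finrank_eq).symm
  set ψ : L ≃ₗ[ℝ] Module.Dual ℝ L := LinearMap.linearEquivOfInjective ψ₀ hinj hdim with hψdef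
  have hψ : ∀ u : L, ψ u = (φ ↑u).domRestrict L := fun u => rfl
  refine ⟨ψ, ?_, ?_⟩
  · intro u v
    have := hGramL u v
    simpa [hψ, LinearMap.domRestrict_apply] using this
  intro Pl hPl i hiPl
  set P : Submodule ℝ (Module.Dual ℝ V) := Pl.comap L.subtype.dualMap with hPdef
  have hmemP : ∀ γ : Module.Dual ℝ V, γ ∈ P ↔ γ.domRestrict L ∈ Pl := fun γ => Iff.rfl
  set α : Module.Dual ℝ V := (i : Module.Dual ℝ V) with hαdef
  have hiAB := Finset.mem_sdiff.mp i.2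
  have hiA : α ∈ A := hiAB.1
  have hαP : α ∈ P := (hmemP α).mpr hiPl
  set u : L := ψ.symm (α.domRestrict L) with hudef
  -- `β ∈ B` vanishes on `L`, hence belongs to `P`
  have hBrestr : ∀ β ∈ B, (β : Module.Dual ℝ V).domRestrict L = 0 := by
    intro β hβ
    apply LinearMap.ext
    intro w
    simpa using hLker ↑w w.2 β hβ
  have hBP : ∀ β ∈ B, β ∈ P := fun β hβ => (hmemP β).mpr (by rw [hBrestr β hβ]; exact Pl.zero_mem)
  -- `L` is the coannihilator of `span B`
  have hLco : L = (span ℝ (B : Set (Module.Dual ℝ V))).dualCoannihilator := by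
    rw [hL]
    ext v
    simp only [Submodule.mem_iInf, LinearMap.mem_ker, Submodule.mem_dualCoannihilator]
    constructor
    · intro h f hf
      induction hf using Submodule.span_induction with
      | mem x hx => exact h x hx
      | zero => simp
      | add x y hx hy ihx ihy => simp [LinearMap.add_apply, ihx, ihy]
      | smul a x hx ih => simp [ih]
    · intro h β hβ
      exact h β (subset_span hβ)
  have hann : ∀ γ : Module.Dual ℝ V, (∀ w ∈ L, γ w = 0) →
      γ ∈ span ℝ (B : Set (Module.Dual ℝ V)) := by
    intro γ hγ
    have h1 : γ ∈ L.dualAnnihilator := (Submodule.mem_dualAnnihilator γ).mpr hγ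
    rw [hLco] at h1
    rwa [Subspace.dualCoannihilator_dualAnnihilator_eq] at h1
  -- `φ u` agrees with `α` on `L`
  have hψu : (φ ↑u).domRestrict L = α.domRestrict L := by
    calc (φ ↑u).domRestrict L = ψ u := (hψ u).symm
    _ = α.domRestrict L := ψ.apply_symm_apply _
  have hδmem : φ ↑u - α ∈ span ℝ (B : Set (Module.Dual ℝ V)) := by
    apply hann
    intro w hw
    have := congrArg (fun f => f ⟨w, hw⟩) hψu
    simp only [LinearMap.domRestrict_apply] at this
    simp [this]
  obtain ⟨c, hc⟩ := mem_span_finset.mp hδmem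
  -- coefficient identity
  have hswap : ∀ η γ : Module.Dual ℝ V, η (φ.symm γ) = γ (φ.symm η) := by
    intro η γ
    conv_lhs => rw [← φ.apply_symm_apply η]
    conv_rhs => rw [← φ.apply_symm_apply γ]
    exact hsymm _ _
  have hcoef : ∀ γ : Module.Dual ℝ V,
      γ ↑u = γ (φ.symm α) + ∑ β ∈ B, c β * γ (φ.symm β) := by
    intro γ
    have e1 : γ ↑u = φ ↑u (φ.symm γ) := by
      conv_lhs => rw [← φ.apply_symm_apply γ]
      exact hsymm _ _
    have e3 : φ (↑u : V) = α + (φ ↑u - α) := by abel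
    rw [e1, e3]
    simp only [LinearMap.add_apply]
    congr 1
    · exact hswap α γ
    · rw [← hc.2]
      rw [LinearMap.sum_apply]
      refine Finset.sum_congr rfl fun β _ => ?_
      rw [LinearMap.smul_apply, smul_eq_mul, hswap β γ]
  -- the projection-like map q
  set q : V →ₗ[ℝ] L := ψ.symm.toLinearMap ∘ₗ (L.subtype.dualMap ∘ₗ φ.toLinearMap) with hqdef
  have hq : ∀ v : V, q v = ψ.symm ((φ v).domRestrict L) := fun _ => rfl
  have hqsymm : ∀ γ : Module.Dual ℝ V, q (φ.symm γ) = ψ.symm (γ.domRestrict L) := by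
    intro γ
    rw [hq, φ.apply_symm_apply]
  have hqB : ∀ γ ∈ span ℝ (B : Set (Module.Dual ℝ V)), q (φ.symm γ) = 0 := by
    intro γ hγ
    rw [hqsymm]
    have hz : γ.domRestrict L = 0 := by
      apply LinearMap.ext
      intro w
      have hw : (↑w : V) ∈ (span ℝ (B : Set (Module.Dual ℝ V))).dualCoannihilator := by
        rw [← hLco]; exact w.2
      simpa using (Submodule.mem_dualCoannihilator _).mp hw γ hγ
    rw [hz]
    exact ψ.symm.map_zero
  -- apply the generalized ∨-condition
  have hα₀ : ∑ γ ∈ A.filter (fun γ => γ ∈ P), γ (φ.symm α) • φ.symm γ ∈ ℝ ∙ (φ.symm α) := by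
    have h := vee_span (fun a : ↥A => (a : Module.Dual ℝ V)) φ hvee P ⟨α, hiA⟩ hαP
    rwa [sum_subtype_filter' A (fun γ => γ ∈ P) (fun γ => γ (φ.symm α) • φ.symm γ)] at h
  have hβ₀ : ∀ β ∈ B, ∑ γ ∈ A.filter (fun γ => γ ∈ P), γ (φ.symm β) • φ.symm γ
      ∈ ℝ ∙ (φ.symm β) := by
    intro β hβ
    have h := vee_span (fun a : ↥A => (a : Module.Dual ℝ V)) φ hvee P ⟨β, hBA hβ⟩ (hBP β hβ)
    rwa [sum_subtype_filter' A (fun γ => γ ∈ P) (fun γ => γ (φ.symm β) • φ.symm γ)] at h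
  obtain ⟨t, ht⟩ := mem_span_singleton.mp hα₀
  refine ⟨t, ?_⟩
  -- rewrite the goal sum as a sum over the finset (A \ B).filter (· ∈ P)
  have e0 : (∑ j ∈ Finset.univ.filter
        (fun j : ↥(A \ B) => ((j : Module.Dual ℝ V).domRestrict L) ∈ Pl),
        ((j : Module.Dual ℝ V).domRestrict L) u • ψ.symm ((j : Module.Dual ℝ V).domRestrict L))
      = ∑ γ ∈ (A \ B).filter (fun γ => γ ∈ P),
          (γ ↑u) • ψ.symm (γ.domRestrict L) := by
    rw [← sum_subtype_filter' (A \ B) (fun γ => γ ∈ P)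
      (fun γ => (γ ↑u) • ψ.symm (γ.domRestrict L))]
    rfl
  have e1 : ∑ γ ∈ A.filter (fun γ => γ ∈ P), (γ ↑u) • ψ.symm (γ.domRestrict L)
      = ∑ γ ∈ (A \ B).filter (fun γ => γ ∈ P), (γ ↑u) • ψ.symm (γ.domRestrict L) := by
    have hsub : B.filter (fun γ => γ ∈ P) ⊆ A.filter (fun γ => γ ∈ P) :=
      Finset.filter_subset_filter _ hBA
    rw [← Finset.sum_sdiff hsub]
    have hdiff : A.filter (fun γ => γ ∈ P) \ B.filter (fun γ => γ ∈ P)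
        = (A \ B).filter (fun γ => γ ∈ P) := by
      ext γ
      simp only [Finset.mem_sdiff, Finset.mem_filter]
      tauto
    rw [hdiff]
    have hz : ∑ γ ∈ B.filter (fun γ => γ ∈ P), (γ ↑u) • ψ.symm (γ.domRestrict L) = 0 :=
      Finset.sum_eq_zero fun β hβ => by
        rw [hLker ↑u u.2 β (Finset.mem_filter.mp hβ).1, zero_smul]
    rw [hz, add_zero]
  -- main computation
  have e2 : ∑ γ ∈ A.filter (fun γ => γ ∈ P), (γ ↑u) • ψ.symm (γ.domRestrict L)
      = q (∑ γ ∈ A.filter (fun γ => γ ∈ P), (γ ↑u) • φ.symm γ) := by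
    rw [map_sum]
    exact Finset.sum_congr rfl fun γ _ => by rw [map_smul, hqsymm]
  have hdecomp : ∑ γ ∈ A.filter (fun γ => γ ∈ P), (γ ↑u) • φ.symm γ
      = (∑ γ ∈ A.filter (fun γ => γ ∈ P), γ (φ.symm α) • φ.symm γ)
        + ∑ β ∈ B, c β • (∑ γ ∈ A.filter (fun γ => γ ∈ P), γ (φ.symm β) • φ.symm γ) := by
    calc ∑ γ ∈ A.filter (fun γ => γ ∈ P), (γ ↑u) • φ.symm γ
        = ∑ γ ∈ A.filter (fun γ => γ ∈ P), (γ (φ.symm α) • φ.symm γ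
            + ∑ β ∈ B, (c β * γ (φ.symm β)) • φ.symm γ) := by
          refine Finset.sum_congr rfl fun γ _ => ?_
          rw [hcoef γ, add_smul, Finset.sum_smul]
      _ = _ := by
          rw [Finset.sum_add_distrib]
          congr 1
          rw [Finset.sum_comm]
          refine Finset.sum_congr rfl fun β _ => ?_
          rw [Finset.smul_sum]
          exact Finset.sum_congr rfl fun γ _ => (mul_smul _ _ _)
  have hq2 : ∀ β ∈ B, q (∑ γ ∈ A.filter (fun γ => γ ∈ P), γ (φ.symm β) • φ.symm γ) = 0 := by
    intro β hβ
    obtain ⟨s, hs⟩ := mem_span_singleton.mp (hβ₀ β hβ)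
    rw [← hs, map_smul, hqB β (subset_span hβ), smul_zero]
  have hfinal : ∑ γ ∈ (A \ B).filter (fun γ => γ ∈ P), (γ ↑u) • ψ.symm (γ.domRestrict L)
      = t • u := by
    have h1 : q (∑ γ ∈ A.filter (fun γ => γ ∈ P), γ (φ.symm α) • φ.symm γ) = t • u := by
      rw [← ht, map_smul, hqsymm]
    have h2 : ∑ β ∈ B, q (c β • (∑ γ ∈ A.filter (fun γ => γ ∈ P), γ (φ.symm β) • φ.symm γ))
        = 0 := Finset.sum_eq_zero fun β hβ => by rw [map_smul, hq2 β hβ, smul_zero]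
    rw [← e1, e2, hdecomp, map_add, h1, map_sum, h2, add_zero]
  rw [e0.symm] at hfinal
  exact hfinal
end

section
/- For arbitrary positive parameters c_1,…,c_{m}, the set A_m(c) = { √(c_i c_j)(f_i − f_j) : 1 ≤ i < j ≤ m } in ℝ^m is a ∨-system (restricted to the span of its covectors). -/
open scoped Classical

/-- The hyperplane `{x ∈ ℝ^m : Σ x_i = 0}`, the span of the (duals of the) covectors
`f_i − f_j`, on which the family `A_m(c)` is considered. -/
noncomputable def zeroSumSubspace (m : ℕ) : Submodule ℝ (Fin m → ℝ) :=
  LinearMap.ker (∑ i : Fin m, LinearMap.proj i : (Fin m → ℝ) →ₗ[ℝ] ℝ)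

/-- The covectors `√(c_i c_j)(f_i − f_j)`, `i < j`, of the deformed family `A_m(c)`,
restricted to the span of the covectors (the zero-sum hyperplane). -/
noncomputable def deformedA (m : ℕ) (c : Fin m → ℝ) :
    {p : Fin m × Fin m // p.1 < p.2} → Module.Dual ℝ ↥(zeroSumSubspace m) :=
  fun p =>
    (Real.sqrt (c p.1.1 * c p.1.2) •
      ((LinearMap.proj p.1.1 : (Fin m → ℝ) →ₗ[ℝ] ℝ) -
        (LinearMap.proj p.1.2 : (Fin m → ℝ) →ₗ[ℝ] ℝ))).domRestrict (zeroSumSubspace m)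

namespace VeeAux
variable (m : ℕ) (c : Fin m → ℝ)

lemma mem_zeroSum_iff (x : Fin m → ℝ) : x ∈ zeroSumSubspace m ↔ ∑ t, x t = 0 := by
  simp [zeroSumSubspace, LinearMap.mem_ker, LinearMap.sum_apply, LinearMap.proj_apply]

lemma pair_sum (u v : Fin m → ℝ) :
    ∑ p : {p : Fin m × Fin m // p.1 < p.2},
        (c p.1.1 * c p.1.2) * (u p.1.1 - u p.1.2) * (v p.1.1 - v p.1.2)
      = (∑ k, c k) * (∑ k, c k * u k * v k) - (∑ k, c k * u k) * (∑ k, c k * v k) := by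
  classical
  set F : Fin m × Fin m → ℝ := fun p => (c p.1 * c p.2) * (u p.1 - u p.2) * (v p.1 - v p.2) with hF
  have hsub : ∑ p : {p : Fin m × Fin m // p.1 < p.2}, F p.1
      = ∑ p ∈ Finset.univ.filter (fun p : Fin m × Fin m => p.1 < p.2), F p := by
    rw [Finset.sum_subtype (p := fun p : Fin m × Fin m => p.1 < p.2)
      (Finset.univ.filter (fun p : Fin m × Fin m => p.1 < p.2)) (by simp) F]
  have hswap : ∑ p ∈ Finset.univ.filter (fun p : Fin m × Fin m => p.1 < p.2), F p
      = ∑ p ∈ Finset.univ.filter (fun p : Fin m × Fin m => p.2 < p.1), F p := by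
    refine Finset.sum_nbij' (fun p => Prod.swap p) (fun p => Prod.swap p) ?_ ?_ ?_ ?_ ?_ <;>
      simp only [Finset.mem_filter, Finset.mem_univ, true_and, Prod.fst_swap, Prod.snd_swap,
        Prod.swap_swap, implies_true] <;> intro p hp
    · exact hp
    · exact hp
    · simp [hF]; ring
  have hdiag : ∑ p ∈ Finset.univ.filter
      (fun p : Fin m × Fin m => ¬ p.1 < p.2 ∧ ¬ p.2 < p.1), F p = 0 := by
    refine Finset.sum_eq_zero fun p hp => ?_
    simp only [Finset.mem_filter] at hp
    have : p.1 = p.2 := le_antisymm (not_lt.mp hp.2.2) (not_lt.mp hp.2.1)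
    simp [hF, this]
  have htot : ∑ p : Fin m × Fin m, F p
      = (∑ p ∈ Finset.univ.filter (fun p : Fin m × Fin m => p.1 < p.2), F p)
        + (∑ p ∈ Finset.univ.filter (fun p : Fin m × Fin m => p.2 < p.1), F p) := by
    rw [← Finset.sum_filter_add_sum_filter_not Finset.univ (fun p : Fin m × Fin m => p.1 < p.2) F]
    congr 1
    rw [← Finset.sum_filter_add_sum_filter_not
      (Finset.univ.filter (fun p : Fin m × Fin m => ¬ p.1 < p.2))
      (fun p : Fin m × Fin m => p.2 < p.1) F]
    rw [Finset.filter_filter, Finset.filter_filter]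
    have h1 : (Finset.univ.filter fun p : Fin m × Fin m => ¬ p.1 < p.2 ∧ p.2 < p.1)
        = Finset.univ.filter fun p : Fin m × Fin m => p.2 < p.1 := by
      apply Finset.filter_congr; intro p _; constructor
      · exact fun h => h.2
      · exact fun h => ⟨asymm h, h⟩
    rw [h1, hdiag, add_zero]
  have hexp : ∑ p : Fin m × Fin m, F p
      = 2 * ((∑ k, c k) * (∑ k, c k * u k * v k) - (∑ k, c k * u k) * (∑ k, c k * v k)) := by
    rw [Fintype.sum_prod_type]
    have inner : ∀ k, ∑ l, F (k, l)
        = (c k * (u k * v k)) * (∑ s, c s) - (c k * u k) * (∑ s, c s * v s)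
          - (c k * v k) * (∑ s, c s * u s) + c k * (∑ s, c s * u s * v s) := by
      intro k
      rw [show (fun l => F (k, l)) = fun l =>
          (c k * (u k * v k)) * c l - (c k * u k) * (c l * v l)
            - (c k * v k) * (c l * u l) + c k * (c l * u l * v l) from
        funext fun l => by simp only [hF]; ring]
      rw [Finset.sum_add_distrib, Finset.sum_sub_distrib, Finset.sum_sub_distrib,
        ← Finset.mul_sum, ← Finset.mul_sum, ← Finset.mul_sum, ← Finset.mul_sum]
    rw [Finset.sum_congr rfl fun k _ => inner k]
    rw [Finset.sum_add_distrib, Finset.sum_sub_distrib, Finset.sum_sub_distrib,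
      ← Finset.sum_mul, ← Finset.sum_mul, ← Finset.sum_mul, ← Finset.sum_mul]
    have e1 : ∑ k, c k * (u k * v k) = ∑ k, c k * u k * v k := by
      refine Finset.sum_congr rfl fun k _ => by ring
    rw [e1]; ring
  have h2 := htot
  rw [← hswap] at h2
  rw [hsub]
  linarith [hexp, h2]

noncomputable def Ecov (k l : Fin m) : Module.Dual ℝ ↥(zeroSumSubspace m) :=
  (Real.sqrt (c k * c l) • ((LinearMap.proj k : (Fin m → ℝ) →ₗ[ℝ] ℝ) -
    (LinearMap.proj l : (Fin m → ℝ) →ₗ[ℝ] ℝ))).domRestrict (zeroSumSubspace m)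

lemma deformedA_eq (p : {p : Fin m × Fin m // p.1 < p.2}) :
    deformedA m c p = Ecov m c p.1.1 p.1.2 := rfl

lemma Ecov_apply (k l : Fin m) (x : zeroSumSubspace m) :
    Ecov m c k l x = Real.sqrt (c k * c l) * ((x : Fin m → ℝ) k - (x : Fin m → ℝ) l) := rfl

lemma Ecov_swap (k l : Fin m) : Ecov m c l k = - Ecov m c k l := by
  ext x
  simp only [Ecov_apply, LinearMap.neg_apply]
  rw [mul_comm (c l) (c k)]; ring

noncomputable def wvec (k l : Fin m) : Fin m → ℝ := fun t =>
  Real.sqrt (c k * c l) / (∑ s, c s) *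
    ((if t = k then 1 / c k else 0) - (if t = l then 1 / c l else 0) - (1 / c k - 1 / c l) / m)

lemma wvec_swap (k l : Fin m) : wvec m c l k = - wvec m c k l := by
  funext t
  simp only [wvec, Pi.neg_apply]
  rw [mul_comm (c l) (c k)]; ring

lemma wvec_mem (k l : Fin m) : wvec m c k l ∈ zeroSumSubspace m := by
  have hm : (m : ℝ) ≠ 0 := Nat.cast_ne_zero.mpr (Fin.pos k).ne'
  rw [mem_zeroSum_iff]
  simp only [wvec]
  rw [← Finset.mul_sum]
  rw [Finset.sum_sub_distrib, Finset.sum_sub_distrib, Finset.sum_ite_eq' Finset.univ k,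
    Finset.sum_ite_eq' Finset.univ l, Finset.sum_const, Finset.card_univ, Fintype.card_fin]
  simp only [Finset.mem_univ, if_true, nsmul_eq_mul]
  rw [mul_div_cancel₀ _ hm]
  ring

lemma deformedA_apply (p : {p : Fin m × Fin m // p.1 < p.2}) (x : zeroSumSubspace m) :
    deformedA m c p x
      = Real.sqrt (c p.1.1 * c p.1.2) * ((x : Fin m → ℝ) p.1.1 - (x : Fin m → ℝ) p.1.2) := rfl

noncomputable def gramMap : ↥(zeroSumSubspace m) →ₗ[ℝ] Module.Dual ℝ ↥(zeroSumSubspace m) :=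
  ∑ p : {p : Fin m × Fin m // p.1 < p.2}, (deformedA m c p).smulRight (deformedA m c p)

lemma gramMap_apply (u v : zeroSumSubspace m) :
    gramMap m c u v = ∑ p : {p : Fin m × Fin m // p.1 < p.2}, deformedA m c p u * deformedA m c p v := by
  simp [gramMap, LinearMap.sum_apply, LinearMap.smulRight_apply, smul_eq_mul]

lemma gramMap_closed (hc : ∀ i, 0 < c i) (u v : zeroSumSubspace m) :
    gramMap m c u v
      = (∑ k, c k) * (∑ k, c k * (u : Fin m → ℝ) k * (v : Fin m → ℝ) k)
        - (∑ k, c k * (u : Fin m → ℝ) k) * (∑ k, c k * (v : Fin m → ℝ) k) := by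
  rw [gramMap_apply, ← pair_sum m c (u : Fin m → ℝ) (v : Fin m → ℝ)]
  refine Finset.sum_congr rfl fun p _ => ?_
  rw [deformedA_apply, deformedA_apply]
  set s := Real.sqrt (c p.1.1 * c p.1.2) with hs
  have h : s * s = c p.1.1 * c p.1.2 :=
    Real.mul_self_sqrt (mul_nonneg (hc _).le (hc _).le)
  rw [← h]; ring

lemma gramMap_injective (hc : ∀ i, 0 < c i) : Function.Injective (gramMap m c) := by
  rw [injective_iff_map_eq_zero]
  intro u hu
  have h0 : gramMap m c u u = 0 := by rw [hu]; rfl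
  rw [gramMap_apply] at h0
  have hz : ∀ p : {p : Fin m × Fin m // p.1 < p.2}, deformedA m c p u = 0 := by
    have h1 := (Finset.sum_eq_zero_iff_of_nonneg
      (fun p _ => mul_self_nonneg (deformedA m c p u))).mp h0
    intro p
    exact mul_self_eq_zero.mp (h1 p (Finset.mem_univ p))
  have heq : ∀ k l : Fin m, (u : Fin m → ℝ) k = (u : Fin m → ℝ) l := by
    have key : ∀ p : {p : Fin m × Fin m // p.1 < p.2},
        (u : Fin m → ℝ) p.1.1 = (u : Fin m → ℝ) p.1.2 := by
      intro p
      have h2 := hz p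
      rw [deformedA_apply] at h2
      have hs : Real.sqrt (c p.1.1 * c p.1.2) ≠ 0 :=
        (Real.sqrt_pos.mpr (mul_pos (hc _) (hc _))).ne'
      have h3 := (mul_eq_zero.mp h2).resolve_left hs
      linarith [h3]
    intro k l
    rcases lt_trichotomy k l with h | h | h
    · exact key ⟨(k, l), h⟩
    · rw [h]
    · exact (key ⟨(l, k), h⟩).symm
  have hsum : ∑ t, (u : Fin m → ℝ) t = 0 := (mem_zeroSum_iff m _).mp u.2
  ext t
  have hconst : ∑ s, (u : Fin m → ℝ) s = (m : ℝ) * (u : Fin m → ℝ) t := by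
    rw [Finset.sum_congr rfl fun s _ => heq s t]
    simp [Finset.sum_const, Finset.card_univ, Fintype.card_fin, nsmul_eq_mul]
  have hm : (m : ℝ) ≠ 0 := Nat.cast_ne_zero.mpr (Fin.pos t).ne'
  have h4 : (m : ℝ) * (u : Fin m → ℝ) t = 0 := by rw [← hconst]; exact hsum
  have := (mul_eq_zero.mp h4).resolve_left hm
  simpa using this

lemma csum_pos (hc : ∀ i, 0 < c i) (k : Fin m) : 0 < ∑ s, c s :=
  Finset.sum_pos (fun i _ => hc i) ⟨k, Finset.mem_univ k⟩

lemma gram_wvec (hc : ∀ i, 0 < c i) (k l : Fin m) :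
    gramMap m c ⟨wvec m c k l, wvec_mem m c k l⟩ = Ecov m c k l := by
  have hC : (0:ℝ) < ∑ s, c s := csum_pos m c hc k
  set C := ∑ s, c s with hCdef
  set sq := Real.sqrt (c k * c l) with hsq
  set d := 1 / c k - 1 / c l with hd
  ext v
  rw [gramMap_closed m c hc, Ecov_apply]
  set Q := ∑ t, c t * (v : Fin m → ℝ) t with hQ
  have hwcoe : ((⟨wvec m c k l, wvec_mem m c k l⟩ : zeroSumSubspace m) : Fin m → ℝ)
      = wvec m c k l := rfl
  rw [hwcoe]
  have hS1 : ∑ t, c t * wvec m c k l t * (v : Fin m → ℝ) t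
      = sq / C * ((v : Fin m → ℝ) k - (v : Fin m → ℝ) l - d / m * Q) := by
    rw [show (fun t => c t * wvec m c k l t * (v : Fin m → ℝ) t)
        = fun t => sq / C * ((if t = k then (1 / c k) * (c t * (v : Fin m → ℝ) t) else 0)
            - (if t = l then (1 / c l) * (c t * (v : Fin m → ℝ) t) else 0)
            - d / m * (c t * (v : Fin m → ℝ) t)) from
      funext fun t => by simp only [wvec, ← hsq, ← hCdef, ← hd]; split_ifs <;> ring]
    rw [← Finset.mul_sum, Finset.sum_sub_distrib, Finset.sum_sub_distrib,
      Finset.sum_ite_eq' Finset.univ k, Finset.sum_ite_eq' Finset.univ l, ← Finset.mul_sum,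
      ← hQ]
    simp only [Finset.mem_univ, if_true]
    have e1 : (1 / c k) * (c k * (v : Fin m → ℝ) k) = (v : Fin m → ℝ) k := by
      rw [one_div, inv_mul_cancel_left₀ (hc k).ne']
    have e2 : (1 / c l) * (c l * (v : Fin m → ℝ) l) = (v : Fin m → ℝ) l := by
      rw [one_div, inv_mul_cancel_left₀ (hc l).ne']
    rw [e1, e2]
  have hS2 : ∑ t, c t * wvec m c k l t = sq / C * (1 - 1 - d / m * C) := by
    rw [show (fun t => c t * wvec m c k l t)
        = fun t => sq / C * ((if t = k then (1 / c k) * c t else 0)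
            - (if t = l then (1 / c l) * c t else 0) - d / m * c t) from
      funext fun t => by simp only [wvec, ← hsq, ← hCdef, ← hd]; split_ifs <;> ring]
    rw [← Finset.mul_sum, Finset.sum_sub_distrib, Finset.sum_sub_distrib,
      Finset.sum_ite_eq' Finset.univ k, Finset.sum_ite_eq' Finset.univ l, ← Finset.mul_sum,
      ← hCdef]
    simp only [Finset.mem_univ, if_true]
    rw [one_div_mul_cancel (hc k).ne', one_div_mul_cancel (hc l).ne']
  have hm : (m : ℝ) ≠ 0 := Nat.cast_ne_zero.mpr (Fin.pos k).ne'
  rw [hS1, hS2, ← hCdef, ← hsq]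
  field_simp
  ring

lemma Ecov_comb (hc : ∀ i, 0 < c i) (a b t : Fin m) :
    Ecov m c b t = (Real.sqrt (c b * c t) / Real.sqrt (c a * c t)) • Ecov m c a t
      - (Real.sqrt (c b * c t) / Real.sqrt (c a * c b)) • Ecov m c a b := by
  have h1 : Real.sqrt (c a * c t) ≠ 0 := (Real.sqrt_pos.mpr (mul_pos (hc a) (hc t))).ne'
  have h2 : Real.sqrt (c a * c b) ≠ 0 := (Real.sqrt_pos.mpr (mul_pos (hc a) (hc b))).ne'
  ext x
  simp only [Ecov_apply, LinearMap.sub_apply, LinearMap.smul_apply, smul_eq_mul]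
  field_simp
  rw [mul_comm (c b) (c a), mul_comm (c t) (c a)]
  linear_combination (-(√(c b * c t) * (x : Fin m → ℝ) b - √(c b * c t) * (x : Fin m → ℝ) a)) * mul_inv_cancel₀ h2 + (√(c b * c t) * (x : Fin m → ℝ) t - √(c b * c t) * (x : Fin m → ℝ) a) * mul_inv_cancel₀ h1

lemma mem_closure (hc : ∀ i, 0 < c i) (Pl : Submodule ℝ (Module.Dual ℝ ↥(zeroSumSubspace m)))
    (a b t : Fin m) (hab : Ecov m c a b ∈ Pl) (hat : Ecov m c a t ∈ Pl) :
    Ecov m c b t ∈ Pl := by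
  rw [Ecov_comb m c hc a b t]
  exact Submodule.sub_mem _ (Submodule.smul_mem _ _ hat) (Submodule.smul_mem _ _ hab)

lemma coef_self (hc : ∀ i, 0 < c i) (a b : Fin m) (hne : a ≠ b) :
    Real.sqrt (c a * c b) * (wvec m c a b a - wvec m c a b b)
      = (c a + c b) / (∑ s, c s) := by
  have hC : (0:ℝ) < ∑ s, c s := csum_pos m c hc a
  simp only [wvec, eq_self_iff_true, if_true, ite_true, if_neg hne, if_neg hne.symm]
  rw [Real.sqrt_mul (hc a).le]
  set sa := Real.sqrt (c a) with hsa
  set sb := Real.sqrt (c b) with hsb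
  have ha : c a = sa * sa := (Real.mul_self_sqrt (hc a).le).symm
  have hb : c b = sb * sb := (Real.mul_self_sqrt (hc b).le).symm
  have hsan : sa ≠ 0 := by rw [hsa]; exact (Real.sqrt_pos.mpr (hc a)).ne'
  have hsbn : sb ≠ 0 := by rw [hsb]; exact (Real.sqrt_pos.mpr (hc b)).ne'
  rw [ha, hb]
  field_simp
  ring

lemma coef_one (hc : ∀ i, 0 < c i) (a b t : Fin m) (hne : a ≠ b) (hta : t ≠ a) (htb : t ≠ b) :
    wvec m c a b a - wvec m c a b t
      = Real.sqrt (c a * c b) / ((∑ s, c s) * c a) := by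
  simp only [wvec, eq_self_iff_true, if_true, if_neg hne, if_neg hta, if_neg htb, ite_true]
  ring

lemma coef_two (hc : ∀ i, 0 < c i) (a b t : Fin m) (hne : a ≠ b) (hta : t ≠ a) (htb : t ≠ b) :
    wvec m c a b b - wvec m c a b t
      = -(Real.sqrt (c a * c b) / ((∑ s, c s) * c b)) := by
  simp only [wvec, eq_self_iff_true, if_true, if_neg hne.symm, if_neg hta, if_neg htb, ite_true]
  ring

lemma pair_combine (hc : ∀ i, 0 < c i) (a b t : Fin m) :
    (Real.sqrt (c a * c t) * (Real.sqrt (c a * c b) / ((∑ s, c s) * c a))) • wvec m c a t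
      + (Real.sqrt (c b * c t) * -(Real.sqrt (c a * c b) / ((∑ s, c s) * c b))) • wvec m c b t
      = (c t / (∑ s, c s)) • wvec m c a b := by
  have hC : (0:ℝ) < ∑ s, c s := csum_pos m c hc a
  funext s
  simp only [wvec, Pi.add_apply, Pi.smul_apply, smul_eq_mul]
  rw [Real.sqrt_mul (hc a).le (c t), Real.sqrt_mul (hc b).le (c t), Real.sqrt_mul (hc a).le (c b)]
  set sa := Real.sqrt (c a) with hsa
  set sb := Real.sqrt (c b) with hsb
  set st := Real.sqrt (c t) with hst
  have ha : c a = sa * sa := (Real.mul_self_sqrt (hc a).le).symm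
  have hb : c b = sb * sb := (Real.mul_self_sqrt (hc b).le).symm
  have ht : c t = st * st := (Real.mul_self_sqrt (hc t).le).symm
  have hsan : sa ≠ 0 := by rw [hsa]; exact (Real.sqrt_pos.mpr (hc a)).ne'
  have hsbn : sb ≠ 0 := by rw [hsb]; exact (Real.sqrt_pos.mpr (hc b)).ne'
  have hstn : st ≠ 0 := by rw [hst]; exact (Real.sqrt_pos.mpr (hc t)).ne'
  rw [ha, hb, ht]
  by_cases hm0 : (m : ℝ) = 0
  · rw [hm0]
    field_simp
    ring
  · field_simp
    ring

end VeeAux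


/-- for arbitrary positive parameters `c_1, …, c_m`, the set
`A_m(c) = {√(c_i c_j)(f_i − f_j) : 1 ≤ i < j ≤ m}`, restricted to the span of its
covectors, is a ∨-system. -/
theorem deformedA_isVeeSystem (m : ℕ) (c : Fin m → ℝ)
    (hc : ∀ i, 0 < c i) :
    IsVeeSystem (deformedA m c) := by
  classical
  have hinj := VeeAux.gramMap_injective m c hc
  have hdim : Module.finrank ℝ ↥(zeroSumSubspace m)
      = Module.finrank ℝ (Module.Dual ℝ ↥(zeroSumSubspace m)) :=
    (Subspace.dual_finrank_eq (K := ℝ) (V := ↥(zeroSumSubspace m))).symm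
  set φ := (VeeAux.gramMap m c).linearEquivOfInjective hinj hdim with hφdef
  have hφap : ∀ u, φ u = VeeAux.gramMap m c u := fun u => rfl
  have hφs : ∀ k l : Fin m, φ.symm (VeeAux.Ecov m c k l)
      = ⟨VeeAux.wvec m c k l, VeeAux.wvec_mem m c k l⟩ := by
    intro k l
    rw [LinearEquiv.symm_apply_eq]
    exact ((hφap _).trans (VeeAux.gram_wvec m c hc k l)).symm
  refine ⟨φ, fun u v => ?_, ?_⟩
  · rw [hφap u]; exact VeeAux.gramMap_apply m c u v
  intro Pl _hPl q0 hq0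
  obtain ⟨⟨a, b⟩, hab⟩ := q0
  have hq0mem : VeeAux.Ecov m c a b ∈ Pl := hq0
  have hne : a ≠ b := ne_of_lt hab
  set i0 : {p : Fin m × Fin m // p.1 < p.2} := ⟨(a, b), hab⟩ with hi0
  set W : ↥(zeroSumSubspace m) := ⟨VeeAux.wvec m c a b, VeeAux.wvec_mem m c a b⟩ with hWdef
  have hWsymm : φ.symm (deformedA m c i0) = W := hφs a b
  set K : Finset (Fin m) := Finset.univ.filter
      (fun t => t ≠ a ∧ t ≠ b ∧ VeeAux.Ecov m c a t ∈ Pl) with hK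
  refine ⟨(c a + c b + ∑ t ∈ K, c t) / (∑ s, c s), ?_⟩
  rw [hWsymm]
  set S : Finset {p : Fin m × Fin m // p.1 < p.2} :=
    Finset.univ.filter (fun q => deformedA m c q ∈ Pl) with hS
  have hstep : ∑ q ∈ S, deformedA m c q W • φ.symm (deformedA m c q)
      = ∑ q ∈ S, deformedA m c q W •
          (⟨VeeAux.wvec m c q.1.1 q.1.2, VeeAux.wvec_mem m c q.1.1 q.1.2⟩ :
            ↥(zeroSumSubspace m)) :=
    Finset.sum_congr rfl fun q _ => by rw [VeeAux.deformedA_eq, hφs]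
  rw [hstep]
  apply Subtype.ext
  rw [AddSubmonoidClass.coe_finset_sum]
  simp only [SetLike.val_smul]

  set G : {p : Fin m × Fin m // p.1 < p.2} → (Fin m → ℝ) :=
    fun q => deformedA m c q W • VeeAux.wvec m c q.1.1 q.1.2 with hG
  show ∑ q ∈ S, G q = _
  have hi0S : i0 ∈ S := Finset.mem_filter.mpr ⟨Finset.mem_univ _, hq0⟩
  have h1 : ∑ q ∈ S.filter (fun q => q = i0), G q
      = ((c a + c b) / (∑ s, c s)) • VeeAux.wvec m c a b := by
    rw [Finset.filter_eq' S i0, if_pos hi0S, Finset.sum_singleton]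
    show (Real.sqrt (c a * c b) * (VeeAux.wvec m c a b a - VeeAux.wvec m c a b b))
        • VeeAux.wvec m c a b = _
    rw [VeeAux.coef_self m c hc a b hne]
  have hT2 : ∑ q ∈ (S.filter (fun q => ¬ q = i0)).filter (fun q => q.1.1 = a ∨ q.1.2 = a), G q
      = ∑ t ∈ K, (Real.sqrt (c a * c t)
          * (Real.sqrt (c a * c b) / ((∑ s, c s) * c a))) • VeeAux.wvec m c a t := by
    refine Finset.sum_bij' (fun q _ => if q.1.1 = a then q.1.2 else q.1.1)
      (fun t ht => if h : a < t then ⟨(a, t), h⟩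
        else ⟨(t, a), lt_of_le_of_ne (not_lt.mp h)
          (by simp only [hK, Finset.mem_filter, Finset.mem_univ, true_and] at ht
              exact ht.1)⟩) ?_ ?_ ?_ ?_ ?_
    · -- hi
      rintro ⟨⟨x, y⟩, hxy⟩ hq
      dsimp only
      simp only [hS, Finset.mem_filter, Finset.mem_univ, true_and] at hq
      obtain ⟨⟨hmem, hne0⟩, htouch⟩ := hq
      simp only [hK, Finset.mem_filter, Finset.mem_univ, true_and]
      by_cases hx : x = a
      · simp only [if_pos hx]
        refine ⟨?_, ?_, ?_⟩
        · rw [← hx]; exact (ne_of_lt hxy).symm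
        · intro hyb; exact hne0 (Subtype.ext (Prod.ext hx hyb))
        · have hmem' : VeeAux.Ecov m c x y ∈ Pl := hmem
          rw [hx] at hmem'; exact hmem'
      · have hy : y = a := htouch.resolve_left hx
        simp only [if_neg hx]
        refine ⟨hx, ?_, ?_⟩
        · intro hxb; rw [hxb, hy] at hxy; exact (lt_asymm hab) hxy
        · have hmem' : VeeAux.Ecov m c x y ∈ Pl := hmem
          rw [hy] at hmem'
          rw [VeeAux.Ecov_swap m c x a]
          exact Submodule.neg_mem _ hmem'
    · -- hj
      intro t ht
      have ht' := ht
      simp only [hK, Finset.mem_filter, Finset.mem_univ, true_and] at ht'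
      obtain ⟨hta, htb, htPl⟩ := ht'
      by_cases hat : a < t
      · rw [dif_pos hat]
        simp only [hS, Finset.mem_filter, Finset.mem_univ, true_and]
        refine ⟨⟨htPl, ?_⟩, Or.inl trivial⟩
        intro hcon
        exact htb (congrArg (fun z => z.1.2) hcon)
      · rw [dif_neg hat]
        simp only [hS, Finset.mem_filter, Finset.mem_univ, true_and]
        refine ⟨⟨?_, ?_⟩, Or.inr trivial⟩
        · show VeeAux.Ecov m c t a ∈ Pl
          rw [VeeAux.Ecov_swap m c a t]
          exact Submodule.neg_mem _ htPl
        · intro hcon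
          exact hta (congrArg (fun z => z.1.1) hcon)
    · -- left_inv
      rintro ⟨⟨x, y⟩, hxy⟩ hq
      dsimp only
      simp only [hS, Finset.mem_filter, Finset.mem_univ, true_and] at hq
      obtain ⟨⟨hmem, hne0⟩, htouch⟩ := hq
      by_cases hx : x = a
      · simp only [if_pos hx]
        have hay : a < y := by rw [← hx]; exact hxy
        rw [dif_pos hay]
        exact Subtype.ext (Prod.ext hx.symm rfl)
      · have hy : y = a := htouch.resolve_left hx
        simp only [if_neg hx]
        have hxa : x < a := by rw [← hy]; exact hxy
        rw [dif_neg (not_lt.mpr (le_of_lt hxa))]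
        exact Subtype.ext (Prod.ext rfl hy.symm)
    · -- right_inv
      intro t ht
      have ht' := ht
      simp only [hK, Finset.mem_filter, Finset.mem_univ, true_and] at ht'
      by_cases hat : a < t
      · rw [dif_pos hat]; simp
      · rw [dif_neg hat]; simp [ht'.1]
    · -- values
      rintro ⟨⟨x, y⟩, hxy⟩ hq
      dsimp only
      simp only [hS, Finset.mem_filter, Finset.mem_univ, true_and] at hq
      obtain ⟨⟨hmem, hne0⟩, htouch⟩ := hq
      by_cases hx : x = a
      · simp only [if_pos hx]
        have hya : y ≠ a := by rw [← hx]; exact (ne_of_lt hxy).symm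
        have hyb : y ≠ b := fun hyb => hne0 (Subtype.ext (Prod.ext hx hyb))
        show (Real.sqrt (c x * c y) * (VeeAux.wvec m c a b x - VeeAux.wvec m c a b y))
            • VeeAux.wvec m c x y = _
        rw [hx, VeeAux.coef_one m c hc a b y hne hya hyb]
      · have hy : y = a := htouch.resolve_left hx
        simp only [if_neg hx]
        have hxb : x ≠ b := fun hxb => by rw [hxb, hy] at hxy; exact (lt_asymm hab) hxy
        show (Real.sqrt (c x * c y) * (VeeAux.wvec m c a b x - VeeAux.wvec m c a b y))
            • VeeAux.wvec m c x y = _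
        rw [hy, VeeAux.wvec_swap m c a x, mul_comm (c x) (c a),
          show VeeAux.wvec m c a b x - VeeAux.wvec m c a b a
            = -(VeeAux.wvec m c a b a - VeeAux.wvec m c a b x) by ring,
          VeeAux.coef_one m c hc a b x hne hx hxb]
        rw [mul_neg, neg_smul, smul_neg, neg_neg]
  have hT3 : ∑ q ∈ ((S.filter (fun q => ¬ q = i0)).filter
        (fun q => ¬ (q.1.1 = a ∨ q.1.2 = a))).filter (fun q => q.1.1 = b ∨ q.1.2 = b), G q
      = ∑ t ∈ K, (Real.sqrt (c b * c t)
          * -(Real.sqrt (c a * c b) / ((∑ s, c s) * c b))) • VeeAux.wvec m c b t := by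
    have hba : VeeAux.Ecov m c b a ∈ Pl := by
      rw [VeeAux.Ecov_swap m c a b]; exact Submodule.neg_mem _ hq0mem
    refine Finset.sum_bij' (fun q _ => if q.1.1 = b then q.1.2 else q.1.1)
      (fun t ht => if h : b < t then ⟨(b, t), h⟩
        else ⟨(t, b), lt_of_le_of_ne (not_lt.mp h)
          (by simp only [hK, Finset.mem_filter, Finset.mem_univ, true_and] at ht
              exact ht.2.1)⟩) ?_ ?_ ?_ ?_ ?_
    · -- hi
      rintro ⟨⟨x, y⟩, hxy⟩ hq
      dsimp only
      simp only [hS, Finset.mem_filter, Finset.mem_univ, true_and, not_or] at hq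
      obtain ⟨⟨⟨hmem, hne0⟩, hxa, hya⟩, htouch⟩ := hq
      simp only [hK, Finset.mem_filter, Finset.mem_univ, true_and]
      by_cases hx : x = b
      · simp only [if_pos hx]
        refine ⟨hya, ?_, ?_⟩
        · rw [← hx]; exact (ne_of_lt hxy).symm
        · have hmem' : VeeAux.Ecov m c x y ∈ Pl := hmem
          rw [hx] at hmem'
          exact VeeAux.mem_closure m c hc Pl b a y hba hmem'
      · have hy : y = b := htouch.resolve_left hx
        simp only [if_neg hx]
        refine ⟨hxa, hx, ?_⟩
        have hmem' : VeeAux.Ecov m c x y ∈ Pl := hmem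
        rw [hy] at hmem'
        have hbx : VeeAux.Ecov m c b x ∈ Pl := by
          rw [VeeAux.Ecov_swap m c x b]; exact Submodule.neg_mem _ hmem'
        exact VeeAux.mem_closure m c hc Pl b a x hba hbx
    · -- hj
      intro t ht
      have ht' := ht
      simp only [hK, Finset.mem_filter, Finset.mem_univ, true_and] at ht'
      obtain ⟨hta, htb, htPl⟩ := ht'
      have hbt : VeeAux.Ecov m c b t ∈ Pl := VeeAux.mem_closure m c hc Pl a b t hq0mem htPl
      by_cases hat : b < t
      · rw [dif_pos hat]
        simp only [hS, Finset.mem_filter, Finset.mem_univ, true_and, not_or]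
        refine ⟨⟨⟨hbt, ?_⟩, hne.symm, hta⟩, Or.inl trivial⟩
        intro hcon
        exact hne.symm (congrArg (fun z => z.1.1) hcon)
      · rw [dif_neg hat]
        simp only [hS, Finset.mem_filter, Finset.mem_univ, true_and, not_or]
        refine ⟨⟨⟨?_, ?_⟩, hta, hne.symm⟩, Or.inr trivial⟩
        · show VeeAux.Ecov m c t b ∈ Pl
          rw [VeeAux.Ecov_swap m c b t]
          exact Submodule.neg_mem _ hbt
        · intro hcon
          exact hta (congrArg (fun z => z.1.1) hcon)
    · -- left_inv
      rintro ⟨⟨x, y⟩, hxy⟩ hq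
      dsimp only
      simp only [hS, Finset.mem_filter, Finset.mem_univ, true_and, not_or] at hq
      obtain ⟨⟨⟨hmem, hne0⟩, hxa, hya⟩, htouch⟩ := hq
      by_cases hx : x = b
      · simp only [if_pos hx]
        have hay : b < y := by rw [← hx]; exact hxy
        rw [dif_pos hay]
        exact Subtype.ext (Prod.ext hx.symm rfl)
      · have hy : y = b := htouch.resolve_left hx
        simp only [if_neg hx]
        have hxa' : x < b := by rw [← hy]; exact hxy
        rw [dif_neg (not_lt.mpr (le_of_lt hxa'))]
        exact Subtype.ext (Prod.ext rfl hy.symm)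
    · -- right_inv
      intro t ht
      have ht' := ht
      simp only [hK, Finset.mem_filter, Finset.mem_univ, true_and] at ht'
      by_cases hat : b < t
      · rw [dif_pos hat]; simp
      · rw [dif_neg hat]; simp [ht'.2.1]
    · -- values
      rintro ⟨⟨x, y⟩, hxy⟩ hq
      dsimp only
      simp only [hS, Finset.mem_filter, Finset.mem_univ, true_and, not_or] at hq
      obtain ⟨⟨⟨hmem, hne0⟩, hxa, hya⟩, htouch⟩ := hq
      by_cases hx : x = b
      · simp only [if_pos hx]
        have hya' : y ≠ a := hya
        have hyb : y ≠ b := by rw [← hx]; exact (ne_of_lt hxy).symm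
        show (Real.sqrt (c x * c y) * (VeeAux.wvec m c a b x - VeeAux.wvec m c a b y))
            • VeeAux.wvec m c x y = _
        rw [hx, VeeAux.coef_two m c hc a b y hne hya' hyb]
      · have hy : y = b := htouch.resolve_left hx
        simp only [if_neg hx]
        show (Real.sqrt (c x * c y) * (VeeAux.wvec m c a b x - VeeAux.wvec m c a b y))
            • VeeAux.wvec m c x y = _
        rw [hy, VeeAux.wvec_swap m c b x, mul_comm (c x) (c b),
          show VeeAux.wvec m c a b x - VeeAux.wvec m c a b b
            = -(VeeAux.wvec m c a b b - VeeAux.wvec m c a b x) by ring,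
          VeeAux.coef_two m c hc a b x hne hxa hx]
        rw [neg_neg, smul_neg, ← neg_smul, ← mul_neg]
  have hT4 : ∑ q ∈ ((S.filter (fun q => ¬ q = i0)).filter
        (fun q => ¬ (q.1.1 = a ∨ q.1.2 = a))).filter (fun q => ¬ (q.1.1 = b ∨ q.1.2 = b)),
      G q = 0 := by
    refine Finset.sum_eq_zero ?_
    rintro ⟨⟨x, y⟩, hxy⟩ hq
    simp only [hS, Finset.mem_filter, Finset.mem_univ, true_and, not_or] at hq
    obtain ⟨⟨⟨hmem, hne0⟩, hxa, hya⟩, hxb, hyb⟩ := hq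
    show (Real.sqrt (c x * c y) * (VeeAux.wvec m c a b x - VeeAux.wvec m c a b y))
        • VeeAux.wvec m c x y = 0
    have hz : VeeAux.wvec m c a b x - VeeAux.wvec m c a b y = 0 := by
      simp only [VeeAux.wvec, if_neg hxa, if_neg hxb, if_neg hya, if_neg hyb]
      ring
    rw [hz, mul_zero, zero_smul]
  have split3 := Finset.sum_filter_add_sum_filter_not
    ((S.filter (fun q => ¬ q = i0)).filter (fun q => ¬ (q.1.1 = a ∨ q.1.2 = a)))
    (fun q => q.1.1 = b ∨ q.1.2 = b) G
  have split2 := Finset.sum_filter_add_sum_filter_not (S.filter (fun q => ¬ q = i0))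
    (fun q => q.1.1 = a ∨ q.1.2 = a) G
  have split1 := Finset.sum_filter_add_sum_filter_not S (fun q => q = i0) G
  rw [← split1, ← split2, ← split3, h1, hT2, hT3, hT4, add_zero]
  rw [← Finset.sum_add_distrib]
  have hpair : ∑ t ∈ K,
      ((Real.sqrt (c a * c t) * (Real.sqrt (c a * c b) / ((∑ s, c s) * c a)))
          • VeeAux.wvec m c a t
        + (Real.sqrt (c b * c t) * -(Real.sqrt (c a * c b) / ((∑ s, c s) * c b)))
          • VeeAux.wvec m c b t)
      = ∑ t ∈ K, (c t / (∑ s, c s)) • VeeAux.wvec m c a b :=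
    Finset.sum_congr rfl fun t _ => VeeAux.pair_combine m c hc a b t
  rw [hpair, ← Finset.sum_smul, ← Finset.sum_div, ← add_smul, ← add_div]
end
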